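/- For every finite σ-structure A with a k-pebble linear forest cover, the number of bags needed is controlled as follows: each part S_i of the cover, ordered by ≤_i and enumerated as a_1 ≤_i ... ≤_i a_m, yields via t_i = [(p(a_1), a_1), ..., (p(a_m), a_m)] and α_i(a_j) = (t_i, j) a map α = ⋃_i α_i : A → PR_k A which is a σ-homomorphism satisfying ε_A ∘ α = id_A. -/

import Mathlib

/-- A relational signature: a type of relation symbols with arities. -/
structure Signature where
  symb : Type
  ar : symb → ℕ

/-- A σ-structure: a universe with interpretations of the relation symbols. -/
structure Struct (σ : Signature) where
  carrier : Type
  rel : ∀ r : σ.symb, (Fin (σ.ar r) → carrier) → Prop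

/-- σ-homomorphism. -/
def Hom {σ : Signature} (A B : Struct σ) (f : A.carrier → B.carrier) : Prop :=
  ∀ r x, A.rel r x → B.rel r (fun j => f (x j))

/-- Sequences of pebble placements. -/
abbrev PSeq (k : ℕ) (α : Type) := List (Fin k × α)

/-- Universe of PR_k A: a play together with an index into it. -/
def PRW (k : ℕ) (α : Type) : Type := { p : PSeq k α × ℕ // p.2 < p.1.length }

def eltOf {k : ℕ} {α : Type} (w : PRW k α) : α := (w.1.1.get ⟨w.1.2, w.2⟩).2
def pebOf {k : ℕ} {α : Type} (w : PRW k α) : Fin k := (w.1.1.get ⟨w.1.2, w.2⟩).1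

/-- The pebble p (placed at position i) does not reoccur at positions i+1,...,m of s. -/
def NoReoccur {k : ℕ} {α : Type} (s : PSeq k α) (i m : ℕ) (p : Fin k) : Prop :=
  ∀ l (h : l < s.length), i < l → l ≤ m → (s.get ⟨l, h⟩).1 ≠ p

/-- The pebble-relation construction PR_k on σ-structures. -/
def PR {σ : Signature} (k : ℕ) (A : Struct σ) : Struct σ where
  carrier := PRW k A.carrier
  rel r x :=
    (∀ j j', (x j).1.1 = (x j').1.1) ∧
    (∀ j j', NoReoccur (x j).1.1 (x j).1.2 (x j').1.2 (pebOf (x j))) ∧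
    A.rel r (fun j => eltOf (x j))

/-- Counit ε(s,i) = a_i. -/
def counit {k : ℕ} {α : Type} (w : PRW k α) : α := eltOf w

/-- Coextension f*(s,i) = (t,i) with same pebbles and j-th element f(s,j). -/
def coext {k : ℕ} {α β : Type} (f : PRW k α → β) (w : PRW k α) : PRW k β :=
  ⟨(List.ofFn (fun j : Fin w.1.1.length => ((w.1.1.get j).1, f ⟨(w.1.1, j.1), j.2⟩)), w.1.2),
   by simpa using w.2⟩

/-- Comultiplication δ = (id)*. -/
def comult {k : ℕ} {α : Type} : PRW k α → PRW k (PRW k α) := coext id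

/-- Functor action PR_k f = (f ∘ ε)*. -/
def PRmap {k : ℕ} {α β : Type} (f : α → β) : PRW k α → PRW k β :=
  coext (f ∘ counit)


/-- Gaifman adjacency: equal or co-occurring in some tuple of a relation. -/
def adj {σ : Signature} (A : Struct σ) (a a' : A.carrier) : Prop :=
  a = a' ∨ ∃ (r : σ.symb) (x : Fin (σ.ar r) → A.carrier),
    A.rel r x ∧ (∃ i, x i = a) ∧ (∃ i, x i = a')

/-- A k-pebble linear forest cover of A: a partition of the universe into
linearly ordered parts (encoded as duplicate-free lists) together with a
pebbling function p : A → [k] satisfying (FC1) and (FC2). -/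
structure LFCover (σ : Signature) (A : Struct σ) (k : ℕ) [DecidableEq A.carrier] : Type where
  parts : List (List A.carrier)
  nodup : ∀ l ∈ parts, l.Nodup
  disj : parts.Pairwise (fun l l' => ∀ a ∈ l, a ∉ l')
  cover : ∀ a, ∃ l ∈ parts, a ∈ l
  peb : A.carrier → Fin k
  fc1 : ∀ a a', adj A a a' → ∃ l ∈ parts, a ∈ l ∧ a' ∈ l
  fc2 : ∀ l ∈ parts, ∀ a a' b, a ∈ l → a' ∈ l → b ∈ l → adj A a a' →
    l.idxOf a ≤ l.idxOf a' → l.idxOf a < l.idxOf b →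
    l.idxOf b ≤ l.idxOf a' → peb b ≠ peb a

/-- from a k-pebble linear forest cover of a finite A, the map
α sending a ∈ S_i (enumerated by ≤_i as a_1 ≤_i ... ≤_i a_m) to
(t_i, j) with t_i = [(p(a_1),a_1),...,(p(a_m),a_m)] and a = a_j, is a
σ-homomorphism A → PR_k A satisfying ε_A ∘ α = id. -/
theorem cover_map_is_hom_with_counit_law
    (σ : Signature) (A : Struct σ) (k : ℕ) [Finite A.carrier] [DecidableEq A.carrier]
    (C : LFCover σ A k) :
    ∃ α : A.carrier → PRW k A.carrier,
      (∀ a, ∀ l ∈ C.parts, a ∈ l →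
        (α a).1 = (l.map (fun b => (C.peb b, b)), l.idxOf a)) ∧
      Hom A (PR k A) α ∧
      counit ∘ α = id := by
  classical
  have uniq : ∀ l ∈ C.parts, ∀ l' ∈ C.parts, ∀ a, a ∈ l → a ∈ l' → l = l' := by
    intro l hl l' hl' a ha ha'
    by_contra hne
    have hsym : Symmetric (fun (l l' : List A.carrier) => ∀ a ∈ l, a ∉ l') := by
      intro u v huv b hb hbu
      exact huv b hbu hb
    haveI : Std.Symm (fun (l l' : List A.carrier) => ∀ a ∈ l, a ∉ l') := ⟨fun _ _ h => hsym h⟩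
    exact C.disj.forall hl hl' hne a ha ha'
  have L : ∀ a : A.carrier, {l // l ∈ C.parts ∧ a ∈ l} := fun a =>
    ⟨(C.cover a).choose, (C.cover a).choose_spec.1, (C.cover a).choose_spec.2⟩
  set f : A.carrier → Fin k × A.carrier := fun b => (C.peb b, b) with hf
  have hlen : ∀ a, (L a).1.idxOf a < ((L a).1.map f).length := by
    intro a
    simpa using List.idxOf_lt_length_iff.mpr (L a).2.2
  set α : A.carrier → PRW k A.carrier :=
    fun a => ⟨((L a).1.map f, (L a).1.idxOf a), hlen a⟩ with hα
  have αfst : ∀ a, ∀ l ∈ C.parts, a ∈ l → (α a).1 = (l.map f, l.idxOf a) := by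
    intro a l hl ha
    have h : (L a).1 = l := uniq _ (L a).2.1 _ hl a (L a).2.2 ha
    simp [hα, h]
  have elt : ∀ a, eltOf (α a) = a := by
    intro a
    have h : ((L a).1.map f).get ⟨(L a).1.idxOf a, hlen a⟩ = f a := by
      simp only [List.get_eq_getElem, List.getElem_map]
      exact congrArg f (List.idxOf_get (List.idxOf_lt_length_iff.mpr (L a).2.2))
    simp [hα, eltOf, h, hf]
  have pebα : ∀ a, pebOf (α a) = C.peb a := by
    intro a
    have h : ((L a).1.map f).get ⟨(L a).1.idxOf a, hlen a⟩ = f a := by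
      simp only [List.get_eq_getElem, List.getElem_map]
      exact congrArg f (List.idxOf_get (List.idxOf_lt_length_iff.mpr (L a).2.2))
    simp [hα, pebOf, h, hf]
  refine ⟨α, αfst, ?_, ?_⟩
  · intro r x hx
    refine ⟨?_, ?_, ?_⟩
    · intro j j'
      have hadj : adj A (x j) (x j') := Or.inr ⟨r, x, hx, ⟨j, rfl⟩, ⟨j', rfl⟩⟩
      obtain ⟨l, hl, hj, hj'⟩ := C.fc1 _ _ hadj
      rw [αfst (x j) l hl hj, αfst (x j') l hl hj']
    · intro j j'
      have hadj : adj A (x j) (x j') := Or.inr ⟨r, x, hx, ⟨j, rfl⟩, ⟨j', rfl⟩⟩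
      obtain ⟨l, hl, hj, hj'⟩ := C.fc1 _ _ hadj
      have key : NoReoccur (l.map f) (l.idxOf (x j)) (l.idxOf (x j'))
          (C.peb (x j)) := by
        intro m hm h1 h2
        have hm' : m < l.length := by simpa using hm
        have hbidx : l.idxOf (l.get ⟨m, hm'⟩) = m :=
          List.get_idxOf (C.nodup l hl) ⟨m, hm'⟩
        have hne := C.fc2 l hl (x j) (x j') (l.get ⟨m, hm'⟩) hj hj'
          (List.get_mem l ⟨m, hm'⟩) hadj (by omega) (by omega) (by omega)
        have hg : (l.map f).get ⟨m, hm⟩ = f (l.get ⟨m, hm'⟩) := by simp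
        rw [hg]
        exact hne
      show NoReoccur (α (x j)).1.1 (α (x j)).1.2 (α (x j')).1.2 (pebOf (α (x j)))
      rw [αfst (x j) l hl hj, αfst (x j') l hl hj', pebα (x j)]
      exact key
    · have h : (fun j => eltOf (α (x j))) = x := funext fun j => elt (x j)
      show A.rel r (fun j => eltOf (α (x j)))
      rw [h]; exact hx
  · funext a
    exact elt a
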